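/- arXiv:1811.07824 — 3 statements merged into one kernel-verified Lean document; each statement's English description precedes it below -/
import Mathlib

section
/- Let D be a self-adjoint operator on a Hilbert space H and a a bounded self-adjoint operator in Lip(D) (i.e., a preserves Dom D and [D,a] is bounded). Then the commutator [(1+D²)^{1/2}, a] is bounded if and only if D[F_D, a] is bounded, where F_D = D(1+D²)^{-1/2}. -/
open Filter Topology
open scoped LinearPMap

section Helpers

variable {H : Type*} [NormedAddCommGroup H] [InnerProductSpace ℂ H] [CompleteSpace H]

local notation "⟪" x ", " y "⟫" => @inner ℂ _ _ x y

lemma pmap_congr {f g : H →ₗ.[ℂ] H} (h : f = g) {x : H} (hx : x ∈ f.domain) :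
    ∃ hx' : x ∈ g.domain, g ⟨x, hx'⟩ = f ⟨x, hx⟩ := by
  subst h; exact ⟨hx, rfl⟩

lemma pmap_val_congr {f : H →ₗ.[ℂ] H} {x y : H} (h : x = y) (hx : x ∈ f.domain)
    (hy : y ∈ f.domain) : f ⟨x, hx⟩ = f ⟨y, hy⟩ := by
  cases h; rfl

lemma pmap_sub {f : H →ₗ.[ℂ] H} {x y : H} (hx : x ∈ f.domain) (hy : y ∈ f.domain)
    (hxy : x - y ∈ f.domain) : f ⟨x - y, hxy⟩ = f ⟨x, hx⟩ - f ⟨y, hy⟩ := by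
  have : (⟨x - y, hxy⟩ : f.domain) = ⟨x, hx⟩ - ⟨y, hy⟩ := rfl
  rw [this, f.map_sub]

lemma symm_of_selfadjoint {T : H →ₗ.[ℂ] H} (hT : IsSelfAdjoint T) :
    ∀ x y : T.domain, ⟪(T x : H), (y : H)⟫ = ⟪(x : H), T y⟫ := by
  have hd := hT.dense_domain
  have h := LinearPMap.adjoint_isFormalAdjoint hd
  rw [LinearPMap.isSelfAdjoint_def] at hT
  rw [hT] at h
  exact h

lemma closed_of_selfadjoint {T : H →ₗ.[ℂ] H} (hT : IsSelfAdjoint T)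
    {x y : H} {s : ℕ → T.domain}
    (hsx : Tendsto (fun n => ((s n : H))) atTop (𝓝 x))
    (hsy : Tendsto (fun n => T (s n)) atTop (𝓝 y)) :
    ∃ hx : x ∈ T.domain, T ⟨x, hx⟩ = y := by
  have hd := hT.dense_domain
  have hsymm := symm_of_selfadjoint hT
  have hinner : ∀ z : T.domain, ⟪y, (z : H)⟫ = ⟪x, T z⟫ := by
    intro z
    have h1 : Tendsto (fun n => ⟪(T (s n) : H), (z : H)⟫) atTop (𝓝 ⟪y, (z : H)⟫) :=
      hsy.inner tendsto_const_nhds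
    have h2 : Tendsto (fun n => ⟪((s n : H) : H), T z⟫) atTop (𝓝 ⟪x, T z⟫) :=
      hsx.inner tendsto_const_nhds
    exact tendsto_nhds_unique (h1.congr fun n => hsymm (s n) z) h2
  have hmem : x ∈ T†.domain := LinearPMap.mem_adjoint_domain_of_exists x ⟨y, hinner⟩
  have hval : T† ⟨x, hmem⟩ = y := LinearPMap.adjoint_apply_eq hd ⟨x, hmem⟩ hinner
  rw [LinearPMap.isSelfAdjoint_def] at hT
  obtain ⟨hx, e⟩ := pmap_congr hT hmem
  exact ⟨hx, e.trans hval⟩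

end Helpers

/-- Let `D` be self-adjoint and `a` a bounded self-adjoint operator in
`Lip(D)` (i.e. `a` preserves `Dom D` and `K = [D,a]` is bounded).  Then `[(1+D²)^{1/2}, a]`
is bounded iff `D [F_D, a]` is bounded, where `F_D = D(1+D²)^{-1/2}` is the bounded
transform.  Here `Q = (1+D²)^{-1/2}` (so `(1+D²)^{1/2} = Q⁻¹` and `F_D = D ∘ Q`), and
boundedness of `[(1+D²)^{1/2},a]` means `‖w - a u‖ ≤ c ‖Q u‖` whenever `a (Q u) = Q w`. -/
theorem statement7
    {H : Type*} [NormedAddCommGroup H] [InnerProductSpace ℂ H] [CompleteSpace H]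
    (D : H →ₗ.[ℂ] H) (hD : IsSelfAdjoint D)
    (a : H →L[ℂ] H) (ha : IsSelfAdjoint a)
    (hadom : ∀ x, x ∈ D.domain → a x ∈ D.domain)
    -- `K` is the (bounded extension of the) commutator `[D, a]`
    (K : H →L[ℂ] H)
    (hK : ∀ x, ∀ hx : x ∈ D.domain, K x = D ⟨a x, hadom x hx⟩ - a (D ⟨x, hx⟩))
    -- `Q = (1+D²)^{-1/2}`
    (Q : H →L[ℂ] H) (hQsa : IsSelfAdjoint Q)
    (hQpos : ∀ ψ : H, 0 ≤ (inner ℂ ψ (Q ψ) : ℂ).re)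
    (hQinj : Function.Injective Q)
    (hQmem : ∀ ψ : H, Q ψ ∈ D.domain)
    (hQran : ∀ x, x ∈ D.domain → ∃ u : H, Q u = x)
    (hQmem2 : ∀ ψ : H, D ⟨Q (Q ψ), hQmem (Q ψ)⟩ ∈ D.domain)
    (hQres : ∀ ψ : H, Q (Q ψ) + D ⟨D ⟨Q (Q ψ), hQmem (Q ψ)⟩, hQmem2 ψ⟩ = ψ)
    -- `F = F_D = D (1+D²)^{-1/2}` is the bounded transform
    (F : H →L[ℂ] H) (hF : ∀ ψ : H, F ψ = D ⟨Q ψ, hQmem ψ⟩) :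
    (∃ c : ℝ, ∀ u w : H, a (Q u) = Q w → ‖w - a u‖ ≤ c * ‖Q u‖) ↔
      (∃ hmem : ∀ ψ : H, F (a ψ) - a (F ψ) ∈ D.domain,
        ∃ c : ℝ, ∀ ψ : H, ‖D ⟨F (a ψ) - a (F ψ), hmem ψ⟩‖ ≤ c * ‖ψ‖) := by
  -- the bounded "error" operator
  set G : H →L[ℂ] H := Q.comp a - a.comp Q + K.comp F with hG
  have hGapp : ∀ ψ : H, G ψ = Q (a ψ) - a (Q ψ) + K (F ψ) := fun ψ => rfl
  -- memberships of the two pieces of the commutator on range Q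
  have hm1 : ∀ u : H, F (a (Q u)) ∈ D.domain := by
    intro u
    obtain ⟨w, hw⟩ := hQran (a (Q u)) (hadom _ (hQmem u))
    have : F (a (Q u)) = D ⟨Q (Q w), hQmem (Q w)⟩ := by
      rw [hF]
      exact pmap_val_congr (by rw [hw]) _ _
    rw [this]; exact hQmem2 w
  have hm2 : ∀ u : H, a (F (Q u)) ∈ D.domain := by
    intro u
    rw [hF]
    exact hadom _ (hQmem2 u)
  have hmemQ : ∀ u : H, F (a (Q u)) - a (F (Q u)) ∈ D.domain := fun u =>
    Submodule.sub_mem _ (hm1 u) (hm2 u)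
  -- the key algebraic identity on the range of Q
  have key : ∀ u w : H, Q w = a (Q u) →
      ∀ mm : F (a (Q u)) - a (F (Q u)) ∈ D.domain,
      D ⟨F (a (Q u)) - a (F (Q u)), mm⟩ = (w - a u) - G (Q u) := by
    intro u w hw mm
    -- first piece
    have e1 : F (a (Q u)) = D ⟨Q (Q w), hQmem (Q w)⟩ := by
      rw [hF]; exact pmap_val_congr (by rw [hw]) _ _
    have m1' : F (a (Q u)) ∈ D.domain := hm1 u
    have v1 : D ⟨F (a (Q u)), m1'⟩ = w - Q (Q w) := by
      have := hQres w
      have e1' : D ⟨F (a (Q u)), m1'⟩ = D ⟨(D ⟨Q (Q w), hQmem (Q w)⟩ : H), hQmem2 w⟩ :=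
        pmap_val_congr e1 _ _
      rw [e1']
      exact eq_sub_of_add_eq' (hQres w)
    -- second piece
    have m2' : a (F (Q u)) ∈ D.domain := hm2 u
    have v2 : D ⟨a (F (Q u)), m2'⟩ = K (F (Q u)) + a u - a (Q (Q u)) := by
      have hn : (D ⟨Q (Q u), hQmem (Q u)⟩ : H) ∈ D.domain := hQmem2 u
      have hKn := hK (D ⟨Q (Q u), hQmem (Q u)⟩ : H) hn
      have e2 : a (F (Q u)) = a (D ⟨Q (Q u), hQmem (Q u)⟩ : H) := by rw [hF]
      have e2' : D ⟨a (F (Q u)), m2'⟩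
          = D ⟨a (D ⟨Q (Q u), hQmem (Q u)⟩ : H), hadom _ hn⟩ := pmap_val_congr e2 _ _
      have hres : (D ⟨(D ⟨Q (Q u), hQmem (Q u)⟩ : H), hn⟩ : H) = u - Q (Q u) :=
        eq_sub_of_add_eq' (hQres u)
      have hKn' : (D ⟨a (D ⟨Q (Q u), hQmem (Q u)⟩ : H), hadom _ hn⟩ : H)
          = K (D ⟨Q (Q u), hQmem (Q u)⟩ : H) + a (D ⟨(D ⟨Q (Q u), hQmem (Q u)⟩ : H), hn⟩ : H) :=
        eq_add_of_sub_eq hKn.symm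
      rw [e2', hKn', hres, ← hF, map_sub]
      abel
    have vsub : D ⟨F (a (Q u)) - a (F (Q u)), mm⟩
        = D ⟨F (a (Q u)), m1'⟩ - D ⟨a (F (Q u)), m2'⟩ := pmap_sub m1' m2' mm
    rw [vsub, v1, v2, hGapp, hw]
    abel
  constructor
  · -- forward direction
    rintro ⟨c, hc⟩
    set C : ℝ := |c| + ‖G‖ with hCdef
    have hC0 : (0:ℝ) ≤ C := by positivity
    -- the bound on the range of Q
    have hbound : ∀ u : H, ∀ mm : F (a (Q u)) - a (F (Q u)) ∈ D.domain,
        ‖(D ⟨F (a (Q u)) - a (F (Q u)), mm⟩ : H)‖ ≤ C * ‖Q u‖ := by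
      intro u mm
      obtain ⟨w, hw⟩ := hQran (a (Q u)) (hadom _ (hQmem u))
      rw [key u w hw mm]
      have h1 : ‖w - a u‖ ≤ c * ‖Q u‖ := hc u w hw.symm
      have h2 : ‖G (Q u)‖ ≤ ‖G‖ * ‖Q u‖ := G.le_opNorm _
      calc ‖(w - a u) - G (Q u)‖ ≤ ‖w - a u‖ + ‖G (Q u)‖ := norm_sub_le _ _
        _ ≤ c * ‖Q u‖ + ‖G‖ * ‖Q u‖ := add_le_add h1 h2
        _ ≤ |c| * ‖Q u‖ + ‖G‖ * ‖Q u‖ := by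
            have := mul_le_mul_of_nonneg_right (le_abs_self c) (norm_nonneg (Q u))
            linarith
        _ = C * ‖Q u‖ := by ring
    -- difference identity for the sequence argument
    have hdiff : ∀ u v : H,
        (D ⟨F (a (Q u)) - a (F (Q u)), hmemQ u⟩ : H)
          - (D ⟨F (a (Q v)) - a (F (Q v)), hmemQ v⟩ : H)
          = (D ⟨F (a (Q (u - v))) - a (F (Q (u - v))), hmemQ (u - v)⟩ : H) := by
      intro u v
      have e : F (a (Q (u - v))) - a (F (Q (u - v)))
          = (F (a (Q u)) - a (F (Q u))) - (F (a (Q v)) - a (F (Q v))) := by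
        simp only [map_sub]
        abel
      rw [pmap_val_congr e (hmemQ (u - v))
        (Submodule.sub_mem _ (hmemQ u) (hmemQ v)),
        pmap_sub (hmemQ u) (hmemQ v)]
    -- now treat a general ψ by density of the domain of D
    have main : ∀ ψ : H, ∃ mm : F (a ψ) - a (F ψ) ∈ D.domain,
        ‖(D ⟨F (a ψ) - a (F ψ), mm⟩ : H)‖ ≤ C * ‖ψ‖ := by
      intro ψ
      have hdense : Dense (D.domain : Set H) := hD.dense_domain
      obtain ⟨x, hxmem, hxlim⟩ := mem_closure_iff_seq_limit.mp (hdense ψ)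
      choose uu huu using fun n => hQran (x n) (hxmem n)
      -- sequence in the domain
      set s : ℕ → D.domain := fun n =>
        ⟨F (a (Q (uu n))) - a (F (Q (uu n))), hmemQ (uu n)⟩ with hs
      have hxQ : ∀ n, Q (uu n) = x n := huu
      have hsx : Filter.Tendsto (fun n => ((s n : H))) Filter.atTop (nhds (F (a ψ) - a (F ψ))) := by
        have hcont : Continuous fun z : H => F (a z) - a (F z) := by fun_prop
        have : Filter.Tendsto (fun n => Q (uu n)) Filter.atTop (nhds ψ) := by
          simpa [hxQ] using hxlim
        exact (hcont.tendsto ψ).comp this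
      have hcauchy : CauchySeq fun n => (D (s n) : H) := by
        rw [Metric.cauchySeq_iff]
        intro ε hε
        have hx' : CauchySeq x := hxlim.cauchySeq
        rw [Metric.cauchySeq_iff] at hx'
        obtain ⟨N, hN⟩ := hx' (ε / (C + 1)) (by positivity)
        refine ⟨N, fun m hm n hn => ?_⟩
        have hd : dist (D (s m) : H) (D (s n) : H)
            ≤ C * dist (x m) (x n) := by
          rw [dist_eq_norm, dist_eq_norm]
          have := hbound (uu m - uu n) (hmemQ (uu m - uu n))
          rw [← hdiff (uu m) (uu n)] at this
          calc ‖(D (s m) : H) - (D (s n) : H)‖ ≤ C * ‖Q (uu m - uu n)‖ := this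
            _ = C * ‖x m - x n‖ := by rw [map_sub, hxQ, hxQ]
        calc dist (D (s m) : H) (D (s n) : H) ≤ C * dist (x m) (x n) := hd
          _ ≤ C * (ε / (C + 1)) :=
              mul_le_mul_of_nonneg_left (le_of_lt (hN m hm n hn)) hC0
          _ < (C + 1) * (ε / (C + 1)) := by
              have : (0:ℝ) < ε / (C + 1) := by positivity
              nlinarith
          _ = ε := by field_simp
        done
      obtain ⟨y, hy⟩ := cauchySeq_tendsto_of_complete hcauchy
      obtain ⟨mm, hmm⟩ := closed_of_selfadjoint hD hsx hy
      refine ⟨mm, ?_⟩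
      rw [hmm]
      have hnorm : Filter.Tendsto (fun n => ‖(D (s n) : H)‖) Filter.atTop (nhds ‖y‖) :=
        hy.norm
      have hrhs : Filter.Tendsto (fun n => C * ‖x n‖) Filter.atTop (nhds (C * ‖ψ‖)) :=
        (hxlim.norm).const_mul C
      refine le_of_tendsto_of_tendsto' hnorm hrhs fun n => ?_
      calc ‖(D (s n) : H)‖ ≤ C * ‖Q (uu n)‖ := hbound (uu n) (hmemQ (uu n))
        _ = C * ‖x n‖ := by rw [hxQ]
    exact ⟨fun ψ => (main ψ).elim fun h _ => h, C, fun ψ => by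
      obtain ⟨mm, hmm⟩ := main ψ
      exact hmm⟩
  · -- reverse direction
    rintro ⟨hmem, c, hc⟩
    refine ⟨c + ‖G‖, fun u w hw => ?_⟩
    have hkey := key u w hw.symm (hmem (Q u))
    have : w - a u = (D ⟨F (a (Q u)) - a (F (Q u)), hmem (Q u)⟩ : H) + G (Q u) := by
      rw [hkey]; abel
    rw [this]
    calc ‖(D ⟨F (a (Q u)) - a (F (Q u)), hmem (Q u)⟩ : H) + G (Q u)‖
        ≤ ‖(D ⟨F (a (Q u)) - a (F (Q u)), hmem (Q u)⟩ : H)‖ + ‖G (Q u)‖ := norm_add_le _ _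
      _ ≤ c * ‖Q u‖ + ‖G‖ * ‖Q u‖ := add_le_add (hc (Q u)) (G.le_opNorm _)
      _ = (c + ‖G‖) * ‖Q u‖ := by ring
end

section
/- Let H be a Hilbert space, D a self-adjoint operator on H, and T a bounded self-adjoint operator such that T·Dom D ⊆ Dom D, [D,T] is bounded and preserves Dom D. Then for every λ ≥ 0, the commutator [(1+λ+D²)^{-1}, T] equals −(1+λ+D²)^{-1}([D,T]D + D[D,T])(1+λ+D²)^{-1} on H, and its norm is O(λ^{-3/2}) as λ → ∞. -/
section Statement18Aux

variable {H : Type*} [NormedAddCommGroup H] [InnerProductSpace ℂ H]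

private lemma pD_add (D : H →ₗ.[ℂ] H) {u v : H} (hu : u ∈ D.domain) (hv : v ∈ D.domain)
    (h : u + v ∈ D.domain) : D ⟨u + v, h⟩ = D ⟨u, hu⟩ + D ⟨v, hv⟩ :=
  D.map_add ⟨u, hu⟩ ⟨v, hv⟩

private lemma pD_sub (D : H →ₗ.[ℂ] H) {u v : H} (hu : u ∈ D.domain) (hv : v ∈ D.domain)
    (h : u - v ∈ D.domain) : D ⟨u - v, h⟩ = D ⟨u, hu⟩ - D ⟨v, hv⟩ :=
  D.map_sub ⟨u, hu⟩ ⟨v, hv⟩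

private lemma pD_congr (D : H →ₗ.[ℂ] H) {u v : H} (hu : u ∈ D.domain) (huv : u = v)
    (hv : v ∈ D.domain) : D ⟨u, hu⟩ = D ⟨v, hv⟩ := by subst huv; rfl

end Statement18Aux

open scoped ComplexInnerProductSpace

/-- Let `D` be a self-adjoint operator on a Hilbert space `H`, and `T` a
bounded self-adjoint operator preserving `Dom D`, whose commutator `K = [D,T]` is bounded
and preserves `Dom D`.  Let `R λ = (1+λ+D²)⁻¹` be the resolvents.  Then for every `λ ≥ 0`,
`[R λ, T] = - R λ ([D,T]D + D[D,T]) R λ`, and `‖[R λ, T]‖ = O(λ^{-3/2})` as `λ → ∞`. -/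
theorem statement18
    {H : Type*} [NormedAddCommGroup H] [InnerProductSpace ℂ H] [CompleteSpace H]
    (D : H →ₗ.[ℂ] H) (hD : IsSelfAdjoint D)
    (T : H →L[ℂ] H) (hTsa : IsSelfAdjoint T)
    (hTdom : ∀ x, x ∈ D.domain → T x ∈ D.domain)
    -- `K` is the (bounded extension of the) commutator `[D, T]`, preserving `Dom D`
    (K : H →L[ℂ] H)
    (hK : ∀ x, ∀ hx : x ∈ D.domain, K x = D ⟨T x, hTdom x hx⟩ - T (D ⟨x, hx⟩))
    (hKdom : ∀ x, x ∈ D.domain → K x ∈ D.domain)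
    -- `R λ = (1+λ+D²)⁻¹`
    (R : ℝ → (H →L[ℂ] H))
    (hR1 : ∀ lam : ℝ, ∀ hl : 0 ≤ lam, ∀ ψ : H, R lam ψ ∈ D.domain)
    (hR2 : ∀ lam : ℝ, ∀ hl : 0 ≤ lam, ∀ ψ : H,
      D ⟨R lam ψ, hR1 lam hl ψ⟩ ∈ D.domain)
    (hRres : ∀ lam : ℝ, ∀ hl : 0 ≤ lam, ∀ ψ : H,
      (1 + lam) • R lam ψ + D ⟨D ⟨R lam ψ, hR1 lam hl ψ⟩, hR2 lam hl ψ⟩ = ψ) :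
    (∀ lam : ℝ, ∀ hl : 0 ≤ lam, ∀ ψ : H,
      R lam (T ψ) - T (R lam ψ) =
        - R lam (K (D ⟨R lam ψ, hR1 lam hl ψ⟩)
            + D ⟨K (R lam ψ), hKdom _ (hR1 lam hl ψ)⟩)) ∧
    ∃ c : ℝ, ∀ lam : ℝ, 1 ≤ lam →
      ‖R lam ∘L T - T ∘L R lam‖ ≤ c * lam ^ (-(3 : ℝ) / 2) := by
  -- Symmetry of `D` on its domain.
  have hdense : Dense (D.domain : Set H) := hD.dense_domain
  have hfa := LinearPMap.adjoint_isFormalAdjoint hdense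
  rw [LinearPMap.isSelfAdjoint_def] at hD
  rw [hD] at hfa
  have hsym : ∀ x y : D.domain, ⟪(D x : H), (y : H)⟫ = ⟪(x : H), (D y : H)⟫ := hfa
  have hcast : ∀ r : ℝ, (RCLike.ofReal r : ℂ) = Complex.ofReal r := fun _ => rfl
  -- The key quadratic identity for the resolvent.
  have hiden : ∀ lam : ℝ, ∀ hl : 0 ≤ lam, ∀ ψ : H,
      ⟪(R lam ψ : H), ψ⟫ =
        (((1 + lam) * ‖R lam ψ‖ ^ 2 + ‖(D ⟨R lam ψ, hR1 lam hl ψ⟩ : H)‖ ^ 2 : ℝ) : ℂ) := by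
    intro lam hl ψ
    have h0 : ⟪(R lam ψ : H), ψ⟫
        = ⟪(R lam ψ : H), (1 + lam) • R lam ψ
            + (D ⟨D ⟨R lam ψ, hR1 lam hl ψ⟩, hR2 lam hl ψ⟩ : H)⟫ := by
      rw [hRres lam hl ψ]
    rw [h0, inner_add_right, ← Complex.coe_smul, inner_smul_right,
      ← hsym ⟨R lam ψ, hR1 lam hl ψ⟩ ⟨D ⟨R lam ψ, hR1 lam hl ψ⟩, hR2 lam hl ψ⟩]
    simp only [inner_self_eq_norm_sq_to_K, hcast]
    push_cast
    ring
  have hkey : ∀ lam : ℝ, ∀ hl : 0 ≤ lam, ∀ ψ : H,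
      (1 + lam) * ‖R lam ψ‖ ^ 2 + ‖(D ⟨R lam ψ, hR1 lam hl ψ⟩ : H)‖ ^ 2
        ≤ ‖R lam ψ‖ * ‖ψ‖ := by
    intro lam hl ψ
    have h1 := hiden lam hl ψ
    have h2 : ((1 + lam) * ‖R lam ψ‖ ^ 2 + ‖(D ⟨R lam ψ, hR1 lam hl ψ⟩ : H)‖ ^ 2 : ℝ)
        = (⟪(R lam ψ : H), ψ⟫).re := by rw [h1, Complex.ofReal_re]
    rw [h2]
    calc (⟪(R lam ψ : H), ψ⟫).re ≤ ‖⟪(R lam ψ : H), ψ⟫‖ := by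
          exact Complex.re_le_norm _
      _ ≤ ‖R lam ψ‖ * ‖ψ‖ := norm_inner_le_norm _ _
  -- Part 1.
  have part1 : ∀ lam : ℝ, ∀ hl : 0 ≤ lam, ∀ ψ : H,
      R lam (T ψ) - T (R lam ψ) =
        - R lam (K (D ⟨R lam ψ, hR1 lam hl ψ⟩)
            + D ⟨K (R lam ψ), hKdom _ (hR1 lam hl ψ)⟩) := by
    intro lam hl ψ
    set r : H := R lam ψ with hrdef
    have hr : r ∈ D.domain := hR1 lam hl ψ
    have hDr : D ⟨r, hr⟩ ∈ D.domain := hR2 lam hl ψ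
    have hTr : T r ∈ D.domain := hTdom r hr
    have hKr : K r ∈ D.domain := hKdom r hr
    have hTDr : T (D ⟨r, hr⟩) ∈ D.domain := hTdom _ hDr
    have hDTr_eq : D ⟨T r, hTr⟩ = K r + T (D ⟨r, hr⟩) := by
      rw [hK r hr]; abel
    have hDTr : D ⟨T r, hTr⟩ ∈ D.domain := by
      rw [hDTr_eq]; exact D.domain.add_mem hKr hTDr
    have hD2Tr : D ⟨D ⟨T r, hTr⟩, hDTr⟩
        = D ⟨K r, hKr⟩ + (K (D ⟨r, hr⟩) + T (D ⟨D ⟨r, hr⟩, hDr⟩)) := by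
      rw [pD_congr D hDTr hDTr_eq (D.domain.add_mem hKr hTDr), pD_add D hKr hTDr]
      congr 1
      rw [hK (D ⟨r, hr⟩) hDr]; abel
    set w : H := K (D ⟨r, hr⟩) + D ⟨K r, hKr⟩ with hwdef
    have ha : R lam (T ψ) ∈ D.domain := hR1 lam hl (T ψ)
    have hDa : D ⟨R lam (T ψ), ha⟩ ∈ D.domain := hR2 lam hl (T ψ)
    have hb : R lam w ∈ D.domain := hR1 lam hl w
    have hDb : D ⟨R lam w, hb⟩ ∈ D.domain := hR2 lam hl w
    set x : H := R lam (T ψ) - T r + R lam w with hxdef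
    have hx : x ∈ D.domain := D.domain.add_mem (D.domain.sub_mem ha hTr) hb
    have hDx_eq : D ⟨x, hx⟩ = D ⟨R lam (T ψ), ha⟩ - D ⟨T r, hTr⟩ + D ⟨R lam w, hb⟩ := by
      rw [pD_add D (D.domain.sub_mem ha hTr) hb, pD_sub D ha hTr]
    have hDx : D ⟨x, hx⟩ ∈ D.domain := by
      rw [hDx_eq]
      exact D.domain.add_mem (D.domain.sub_mem hDa hDTr) hDb
    have hD2x : D ⟨D ⟨x, hx⟩, hDx⟩
        = D ⟨D ⟨R lam (T ψ), ha⟩, hDa⟩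
          - D ⟨D ⟨T r, hTr⟩, hDTr⟩ + D ⟨D ⟨R lam w, hb⟩, hDb⟩ := by
      rw [pD_congr D hDx hDx_eq (by rw [← hDx_eq]; exact hDx),
        pD_add D (D.domain.sub_mem hDa hDTr) hDb, pD_sub D hDa hDTr]
    have hres_a := hRres lam hl (T ψ)
    have hres_w := hRres lam hl w
    have hres_r := hRres lam hl ψ
    have hTres : (1 + lam) • T r + T (D ⟨D ⟨r, hr⟩, hDr⟩) = T ψ := by
      have h := congrArg T hres_r
      rwa [map_add, T.map_smul_of_tower] at h
    have hzero : (1 + lam) • x + D ⟨D ⟨x, hx⟩, hDx⟩ = 0 := by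
      rw [hD2x, hD2Tr]
      have e1 : D ⟨D ⟨R lam (T ψ), ha⟩, hDa⟩ = T ψ - (1 + lam) • R lam (T ψ) :=
        eq_sub_of_add_eq' hres_a
      have e2 : D ⟨D ⟨R lam w, hb⟩, hDb⟩ = w - (1 + lam) • R lam w :=
        eq_sub_of_add_eq' hres_w
      have e3 : T (D ⟨D ⟨r, hr⟩, hDr⟩) = T ψ - (1 + lam) • T r :=
        eq_sub_of_add_eq' hTres
      rw [e1, e2, e3, hxdef, hwdef]
      module
    have hxnorm : (1 + lam) * ‖x‖ ^ 2 + ‖(D ⟨x, hx⟩ : H)‖ ^ 2 = 0 := by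
      have h0 : ⟪x, (1 + lam) • x + (D ⟨D ⟨x, hx⟩, hDx⟩ : H)⟫ = 0 := by
        rw [hzero, inner_zero_right]
      rw [inner_add_right, ← Complex.coe_smul, inner_smul_right,
        ← hsym ⟨x, hx⟩ ⟨D ⟨x, hx⟩, hDx⟩] at h0
      simp only [inner_self_eq_norm_sq_to_K, hcast] at h0
      exact_mod_cast h0
    have hx0 : x = 0 := by
      have h1 : ‖x‖ ^ 2 = 0 := by
        nlinarith [norm_nonneg x, norm_nonneg (D ⟨x, hx⟩ : H), sq_nonneg ‖x‖,
          sq_nonneg ‖(D ⟨x, hx⟩ : H)‖]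
      exact norm_eq_zero.mp (pow_eq_zero_iff (n := 2) (by norm_num) |>.mp h1)
    rw [hxdef] at hx0
    exact eq_neg_of_add_eq_zero_left hx0
  refine ⟨part1, ⟨2 * ‖K‖, ?_⟩⟩
  intro lam hlam
  have hl : (0 : ℝ) ≤ lam := by linarith
  have hlpos : (0 : ℝ) < lam := by linarith
  set s : ℝ := Real.sqrt (1 + lam) with hsdef
  have hs2 : s ^ 2 = 1 + lam := Real.sq_sqrt (by linarith)
  have hspos : 0 < s := Real.sqrt_pos.mpr (by linarith)
  have h1l : (0 : ℝ) < 1 + lam := by linarith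
  -- norm bounds for the resolvent
  have hRn : ∀ ψ : H, ‖R lam ψ‖ ≤ ‖ψ‖ / (1 + lam) := by
    intro ψ
    have h := hkey lam hl ψ
    rw [le_div_iff₀ h1l]
    nlinarith [norm_nonneg (R lam ψ), norm_nonneg ψ,
      sq_nonneg ‖(D ⟨R lam ψ, hR1 lam hl ψ⟩ : H)‖]
  have hDRn : ∀ ψ : H, ‖(D ⟨R lam ψ, hR1 lam hl ψ⟩ : H)‖ ≤ ‖ψ‖ / s := by
    intro ψ
    have h := hkey lam hl ψ
    have hr := hRn ψ
    have h2 : ‖(D ⟨R lam ψ, hR1 lam hl ψ⟩ : H)‖ ^ 2 ≤ (‖ψ‖ / s) ^ 2 := by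
      have h3 : ‖R lam ψ‖ * ‖ψ‖ ≤ ‖ψ‖ ^ 2 / (1 + lam) := by
        calc ‖R lam ψ‖ * ‖ψ‖ ≤ (‖ψ‖ / (1 + lam)) * ‖ψ‖ :=
              mul_le_mul_of_nonneg_right hr (norm_nonneg ψ)
          _ = ‖ψ‖ ^ 2 / (1 + lam) := by ring
      have h4 : ‖(D ⟨R lam ψ, hR1 lam hl ψ⟩ : H)‖ ^ 2 ≤ ‖ψ‖ ^ 2 / (1 + lam) := by
        nlinarith [norm_nonneg (R lam ψ), sq_nonneg ‖R lam ψ‖]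
      calc ‖(D ⟨R lam ψ, hR1 lam hl ψ⟩ : H)‖ ^ 2 ≤ ‖ψ‖ ^ 2 / (1 + lam) := h4
        _ = (‖ψ‖ / s) ^ 2 := by rw [div_pow, hs2]
    have h5 := Real.sqrt_le_sqrt h2
    rwa [Real.sqrt_sq (norm_nonneg _), Real.sqrt_sq (by positivity)] at h5
  -- the resolvent is symmetric
  have hadjR : ∀ φ χ : H, ⟪(R lam φ : H), χ⟫ = ⟪(φ : H), R lam χ⟫ := by
    intro φ χ
    have e1 : ⟪(R lam φ : H), χ⟫
        = ((1 + lam : ℝ) : ℂ) * ⟪(R lam φ : H), R lam χ⟫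
          + ⟪(D ⟨R lam φ, hR1 lam hl φ⟩ : H), (D ⟨R lam χ, hR1 lam hl χ⟩ : H)⟫ := by
      conv_lhs => rw [← hRres lam hl χ]
      rw [inner_add_right, ← Complex.coe_smul, inner_smul_right,
        ← hsym ⟨R lam φ, hR1 lam hl φ⟩ ⟨D ⟨R lam χ, hR1 lam hl χ⟩, hR2 lam hl χ⟩]
    have e2 : ⟪(φ : H), R lam χ⟫
        = ((1 + lam : ℝ) : ℂ) * ⟪(R lam φ : H), R lam χ⟫
          + ⟪(D ⟨R lam φ, hR1 lam hl φ⟩ : H), (D ⟨R lam χ, hR1 lam hl χ⟩ : H)⟫ := by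
      conv_lhs => rw [← hRres lam hl φ]
      rw [inner_add_left, ← Complex.coe_smul, inner_smul_left, Complex.conj_ofReal,
        hsym ⟨D ⟨R lam φ, hR1 lam hl φ⟩, hR2 lam hl φ⟩ ⟨R lam χ, hR1 lam hl χ⟩]
    rw [e1, ← e2]
  -- bound for `R ∘ D`
  have hRD : ∀ φ : H, ∀ hφ : φ ∈ D.domain, ‖R lam (D ⟨φ, hφ⟩)‖ ≤ ‖φ‖ / s := by
    intro φ hφ
    set u : H := R lam (D ⟨φ, hφ⟩) with hudef
    by_cases hu0 : ‖u‖ = 0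
    · rw [hu0]; positivity
    have hupos : 0 < ‖u‖ := lt_of_le_of_ne (norm_nonneg u) (Ne.symm hu0)
    have h1 : (‖u‖ ^ 2 : ℝ) = (⟪(u : H), u⟫).re := by
      rw [inner_self_eq_norm_sq_to_K, hcast, ← Complex.ofReal_pow, Complex.ofReal_re]
    have h2 : ⟪(u : H), u⟫ = ⟪(φ : H), (D ⟨R lam u, hR1 lam hl u⟩ : H)⟫ := by
      rw [hudef, hadjR (D ⟨φ, hφ⟩) u, ← hsym ⟨φ, hφ⟩ ⟨R lam u, hR1 lam hl u⟩]
    have h3 : ‖u‖ ^ 2 ≤ ‖φ‖ * (‖u‖ / s) := by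
      rw [h1, h2]
      calc (⟪(φ : H), (D ⟨R lam u, hR1 lam hl u⟩ : H)⟫).re
          ≤ ‖⟪(φ : H), (D ⟨R lam u, hR1 lam hl u⟩ : H)⟫‖ := by
            exact Complex.re_le_norm _
        _ ≤ ‖φ‖ * ‖(D ⟨R lam u, hR1 lam hl u⟩ : H)‖ := norm_inner_le_norm _ _
        _ ≤ ‖φ‖ * (‖u‖ / s) := by
            exact mul_le_mul_of_nonneg_left (hDRn u) (norm_nonneg φ)
    rw [le_div_iff₀ hspos]
    rw [← mul_div_assoc] at h3
    have h3' := (le_div_iff₀ hspos).mp h3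
    nlinarith [h3', hupos]
  -- final operator-norm bound
  have hc0 : (0 : ℝ) ≤ 2 * ‖K‖ * lam ^ (-(3 : ℝ) / 2) :=
    mul_nonneg (by positivity) (Real.rpow_nonneg hl _)
  apply ContinuousLinearMap.opNorm_le_bound _ hc0
  intro ψ
  have happ : (R lam ∘L T - T ∘L R lam) ψ = R lam (T ψ) - T (R lam ψ) := rfl
  rw [happ, part1 lam hl ψ, norm_neg, map_add]
  have hb1 : ‖R lam (K (D ⟨R lam ψ, hR1 lam hl ψ⟩))‖ ≤ ‖K‖ * (‖ψ‖ / s) / (1 + lam) := by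
    calc ‖R lam (K (D ⟨R lam ψ, hR1 lam hl ψ⟩))‖
        ≤ ‖K (D ⟨R lam ψ, hR1 lam hl ψ⟩)‖ / (1 + lam) := hRn _
      _ ≤ ‖K‖ * (‖ψ‖ / s) / (1 + lam) := by
          gcongr
          exact (K.le_opNorm _).trans
            (mul_le_mul_of_nonneg_left (hDRn ψ) (norm_nonneg (K : H →L[ℂ] H)))
  have hb2 : ‖R lam (D ⟨K (R lam ψ), hKdom _ (hR1 lam hl ψ)⟩)‖
      ≤ ‖K‖ * (‖ψ‖ / (1 + lam)) / s := by
    calc ‖R lam (D ⟨K (R lam ψ), hKdom _ (hR1 lam hl ψ)⟩)‖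
        ≤ ‖K (R lam ψ)‖ / s := hRD _ (hKdom _ (hR1 lam hl ψ))
      _ ≤ ‖K‖ * (‖ψ‖ / (1 + lam)) / s := by
          gcongr
          exact (K.le_opNorm _).trans
            (mul_le_mul_of_nonneg_left (hRn ψ) (norm_nonneg (K : H →L[ℂ] H)))
  have hsqrt_pos : 0 < lam * Real.sqrt lam :=
    mul_pos hlpos (Real.sqrt_pos.mpr hlpos)
  have hprod : lam * Real.sqrt lam ≤ (1 + lam) * s := by
    apply mul_le_mul (by linarith) (Real.sqrt_le_sqrt (by linarith))
      (Real.sqrt_nonneg _) (by linarith)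
  have hneg : lam ^ (-(3 : ℝ) / 2) = (lam * Real.sqrt lam)⁻¹ := by
    rw [neg_div, Real.rpow_neg hl]
    congr 1
    rw [show (3 : ℝ) / 2 = 1 + 1 / 2 by norm_num, Real.rpow_add hlpos, Real.rpow_one,
      ← Real.sqrt_eq_rpow]
  calc ‖R lam (K (D ⟨R lam ψ, hR1 lam hl ψ⟩))
        + R lam (D ⟨K (R lam ψ), hKdom _ (hR1 lam hl ψ)⟩)‖
      ≤ ‖R lam (K (D ⟨R lam ψ, hR1 lam hl ψ⟩))‖
        + ‖R lam (D ⟨K (R lam ψ), hKdom _ (hR1 lam hl ψ)⟩)‖ := norm_add_le _ _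
    _ ≤ ‖K‖ * (‖ψ‖ / s) / (1 + lam) + ‖K‖ * (‖ψ‖ / (1 + lam)) / s := add_le_add hb1 hb2
    _ = 2 * ‖K‖ * ‖ψ‖ * ((1 + lam) * s)⁻¹ := by field_simp; ring
    _ ≤ 2 * ‖K‖ * ‖ψ‖ * (lam * Real.sqrt lam)⁻¹ := by
        apply mul_le_mul_of_nonneg_left (inv_anti₀ hsqrt_pos hprod) (by positivity)
    _ = 2 * ‖K‖ * lam ^ (-(3 : ℝ) / 2) * ‖ψ‖ := by rw [hneg]; ring
end

section
/- Let D be a self-adjoint operator on a Hilbert space H and T a bounded self-adjoint operator such that D(1+λ+D²)^{-1}T − T·D(1+λ+D²)^{-1} is compact with norm O(λ^{-1}) as λ → ∞ (for all λ ≥ 0, with integrable bound λ^{-1/2}·min(C, C'λ^{-1})). Then the commutator [F_D, T] of the bounded transform F_D = D(1+D²)^{-1/2} with T is a compact operator, since [F_D,T] = (1/π)∫₀^∞ λ^{-1/2} [D(1+λ+D²)^{-1}, T] dλ converges in norm. -/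
open MeasureTheory Set

set_option maxHeartbeats 1000000
set_option synthInstance.maxHeartbeats 400000

/-- Let `D` be a self-adjoint operator on a Hilbert space `H` with bounded
continuous functional calculus `Ψ`, and let `T` be a bounded self-adjoint operator such that
the commutators `[D(1+λ+D²)⁻¹, T]` are compact, with norm bounded by `min(C, C'λ⁻¹)`.
Since `F_D ψ = (1/π) ∫₀^∞ λ^{-1/2} D(1+λ+D²)⁻¹ ψ dλ` holds strongly, the commutator
`[F_D, T]` is a norm-convergent integral of compact operators, hence compact. -/
theorem statement19
    {H : Type*} [NormedAddCommGroup H] [InnerProductSpace ℂ H] [CompleteSpace H]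
    -- `Ψ` is the bounded continuous functional calculus of the self-adjoint operator `D`
    (Ψ : BoundedContinuousFunction ℝ ℂ →⋆ₐ[ℂ] (H →L[ℂ] H))
    (hΨ : Continuous Ψ)
    (T : H →L[ℂ] H) (hT : IsSelfAdjoint T)
    -- `d λ` is the function `x ↦ x(1+λ+x²)⁻¹`, so that `Ψ (d λ) = D(1+λ+D²)⁻¹`
    (d : ℝ → BoundedContinuousFunction ℝ ℂ)
    (hd : ∀ lam : ℝ, 0 ≤ lam → ∀ x : ℝ, d lam x = ((x * (1 + lam + x ^ 2)⁻¹ : ℝ) : ℂ))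
    -- `f` is the function `x ↦ x(1+x²)^{-1/2}`, so that `Ψ f = F_D` is the bounded transform
    (f : BoundedContinuousFunction ℝ ℂ)
    (hf : ∀ x : ℝ, f x = ((x * (Real.sqrt (1 + x ^ 2))⁻¹ : ℝ) : ℂ))
    -- each commutator `[D(1+λ+D²)⁻¹, T]` is compact ...
    (hcpt : ∀ lam : ℝ, 0 ≤ lam →
      IsCompactOperator (Ψ (d lam) ∘L T - T ∘L Ψ (d lam)))
    -- ... with norm `O(λ⁻¹)`, more precisely with the integrable bound `min (C, C' λ⁻¹)`
    (C C' : ℝ)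
    (hbd : ∀ lam : ℝ, 0 ≤ lam →
      ‖Ψ (d lam) ∘L T - T ∘L Ψ (d lam)‖ ≤ min C (C' * lam⁻¹))
    -- the integral representation of the bounded transform holds strongly
    (hrep : ∀ ψ : H,
      IntegrableOn (fun lam : ℝ => (Real.sqrt lam)⁻¹ • Ψ (d lam) ψ) (Ioi 0) volume ∧
      Ψ f ψ = (Real.pi)⁻¹ • ∫ lam in Ioi (0 : ℝ), (Real.sqrt lam)⁻¹ • Ψ (d lam) ψ) :
    IsCompactOperator (Ψ f ∘L T - T ∘L Ψ f) := by
  -- the constants are nonnegative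
  have hC : 0 ≤ C := (norm_nonneg _).trans ((hbd 1 zero_le_one).trans (min_le_left _ _))
  have hC' : 0 ≤ C' := by
    have := (norm_nonneg _).trans ((hbd 1 zero_le_one).trans (min_le_right _ _))
    simpa using this
  set comm : ℝ → (H →L[ℂ] H) := fun lam => Ψ (d lam) ∘L T - T ∘L Ψ (d lam) with hcomm_def
  set g : ℝ → (H →L[ℂ] H) := fun lam => (Real.sqrt lam)⁻¹ • comm lam with hg_def
  -- `d` is Lipschitz on `[0,∞)`, hence `comm` is continuous there
  have hdlip : LipschitzOnWith 1 d (Ici 0) := by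
    refine LipschitzOnWith.of_dist_le_mul fun a ha b hb => ?_
    rw [NNReal.coe_one, one_mul]
    refine (BoundedContinuousFunction.dist_le dist_nonneg).mpr fun x => ?_
    rw [hd a ha x, hd b hb x, Complex.isometry_ofReal.dist_eq, Real.dist_eq, Real.dist_eq]
    have ha' : (0:ℝ) ≤ a := ha
    have hb' : (0:ℝ) ≤ b := hb
    have hu : (0:ℝ) < 1 + a + x ^ 2 := by positivity
    have hv : (0:ℝ) < 1 + b + x ^ 2 := by positivity
    have key : x * (1 + a + x ^ 2)⁻¹ - x * (1 + b + x ^ 2)⁻¹ =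
        x * (b - a) / ((1 + a + x ^ 2) * (1 + b + x ^ 2)) := by
      field_simp
      ring
    rw [key, abs_div, abs_mul, abs_of_pos (mul_pos hu hv), div_le_iff₀ (mul_pos hu hv)]
    have hx : |x| ≤ 1 + a + x ^ 2 := by
      rcases abs_cases x with ⟨h, _⟩ | ⟨h, _⟩ <;> nlinarith [sq_nonneg (|x| - 1), sq_abs x]
    have hba : |b - a| = |a - b| := abs_sub_comm _ _
    calc |x| * |b - a| ≤ (1 + a + x ^ 2) * |b - a| :=
          mul_le_mul_of_nonneg_right hx (abs_nonneg _)
      _ ≤ (1 + a + x ^ 2) * ((1 + b + x ^ 2) * |b - a|) := by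
          refine mul_le_mul_of_nonneg_left ?_ hu.le
          nlinarith [abs_nonneg (b - a), sq_nonneg x]
      _ = |a - b| * ((1 + a + x ^ 2) * (1 + b + x ^ 2)) := by rw [← hba]; ring
  have hcommc : ContinuousOn comm (Ici 0) := by
    have houter : Continuous fun A : H →L[ℂ] H => A ∘L T - T ∘L A :=
      (continuous_id.clm_comp continuous_const).sub (continuous_const.clm_comp continuous_id)
    exact houter.comp_continuousOn (hΨ.comp_continuousOn hdlip.continuousOn)
  have hgc : ContinuousOn g (Ioi 0) := by
    refine ContinuousOn.smul ((Real.continuous_sqrt.continuousOn).inv₀ fun x hx =>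
      Real.sqrt_ne_zero'.mpr hx) (hcommc.mono Ioi_subset_Ici_self)
  -- the integrable scalar bound
  set b : ℝ → ℝ := fun lam => (Real.sqrt lam)⁻¹ * min C (C' * lam⁻¹) with hb_def
  have hbcont : ContinuousOn b (Ioi 0) := by
    refine ContinuousOn.mul ((Real.continuous_sqrt.continuousOn).inv₀ fun x hx =>
        (Real.sqrt_ne_zero'.mpr hx)) ?_
    exact (continuous_const.min continuous_id).comp_continuousOn
      (continuousOn_const.mul (continuousOn_id.inv₀ fun x hx => ne_of_gt hx))
  have hbint : IntegrableOn b (Ioi 0) volume := by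
    have h1 : IntegrableOn b (Ioc 0 1) volume := by
      have hb1 : IntegrableOn (fun lam : ℝ => C * lam ^ (-(1/2) : ℝ)) (Ioc 0 1) volume := by
        have := (intervalIntegral.intervalIntegrable_rpow' (a := 0) (b := 1)
          (r := (-(1/2) : ℝ)) (by norm_num)).const_mul C
        rwa [intervalIntegrable_iff_integrableOn_Ioc_of_le zero_le_one] at this
      refine hb1.mono' (hbcont.mono Ioc_subset_Ioi_self |>.aestronglyMeasurable
        measurableSet_Ioc) ?_
      filter_upwards [ae_restrict_mem measurableSet_Ioc] with lam hlam
      have h0 : 0 < lam := hlam.1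
      have hs : (Real.sqrt lam)⁻¹ = lam ^ (-(1/2) : ℝ) := by
        rw [Real.sqrt_eq_rpow, ← Real.rpow_neg h0.le]
      rw [hb_def, Real.norm_eq_abs, abs_mul, abs_of_nonneg (le_min hC (by positivity)), hs,
        abs_of_nonneg (Real.rpow_nonneg h0.le _), mul_comm C]
      exact mul_le_mul_of_nonneg_left (min_le_left _ _) (Real.rpow_nonneg h0.le _)
    have h2 : IntegrableOn b (Ioi 1) volume := by
      have hb2 : IntegrableOn (fun lam : ℝ => C' * lam ^ (-(3/2) : ℝ)) (Ioi 1) volume :=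
        (integrableOn_Ioi_rpow_of_lt (by norm_num) zero_lt_one).const_mul C'
      refine hb2.mono' (hbcont.mono (Ioi_subset_Ioi zero_le_one) |>.aestronglyMeasurable
        measurableSet_Ioi) ?_
      filter_upwards [ae_restrict_mem measurableSet_Ioi] with lam hlam
      have h0 : (0:ℝ) < lam := lt_trans zero_lt_one hlam
      have hs : (Real.sqrt lam)⁻¹ = lam ^ (-(1/2) : ℝ) := by
        rw [Real.sqrt_eq_rpow, ← Real.rpow_neg h0.le]
      have hkey : lam ^ (-(1/2) : ℝ) * (C' * lam ^ (-1 : ℝ)) = C' * lam ^ (-(3/2) : ℝ) := by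
        rw [mul_comm C', ← mul_assoc, ← Real.rpow_add h0, mul_comm]
        norm_num
      rw [hb_def, Real.norm_eq_abs, abs_mul, abs_of_nonneg (le_min hC (by positivity)), hs,
        abs_of_nonneg (Real.rpow_nonneg h0.le _), ← Real.rpow_neg_one lam, ← hkey]
      exact mul_le_mul_of_nonneg_left (min_le_right _ _) (Real.rpow_nonneg h0.le _)
    have := h1.union h2
    rwa [Ioc_union_Ioi_eq_Ioi zero_le_one] at this
  -- `g` is Bochner integrable as an operator-valued function
  have hgnorm : ∀ lam ∈ Ioi (0:ℝ), ‖g lam‖ ≤ b lam := by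
    intro lam hlam
    have h0 : (0:ℝ) < lam := hlam
    rw [hg_def, norm_smul, norm_inv, Real.norm_eq_abs, abs_of_nonneg (Real.sqrt_nonneg _)]
    exact mul_le_mul_of_nonneg_left (hbd lam h0.le) (by positivity)
  have hgm : AEStronglyMeasurable g (volume.restrict (Ioi 0)) :=
    hgc.aestronglyMeasurable_of_isSeparable measurableSet_Ioi
      (TopologicalSpace.IsSeparable.of_separableSpace _)
  have hgint : IntegrableOn g (Ioi 0) volume := by
    refine hbint.mono' hgm ?_
    filter_upwards [ae_restrict_mem measurableSet_Ioi] with lam hlam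
    exact hgnorm lam hlam
  -- the integral of `g` is a compact operator (integral valued in the closed submodule)
  set p : Submodule ℂ (H →L[ℂ] H) := compactOperator (RingHom.id ℂ) H H with hp_def
  have hp_closed : IsClosed (p : Set (H →L[ℂ] H)) := isClosed_setOf_isCompactOperator
  haveI : CompleteSpace p := hp_closed.completeSpace_coe
  have hmem : ∀ lam : ℝ, 0 < lam → g lam ∈ p := by
    intro lam hlam
    have := (hcpt lam hlam.le).smul ((Real.sqrt lam)⁻¹ : ℝ)
    exact this
  set g' : ℝ → p := fun lam => if h : 0 < lam then ⟨g lam, hmem lam h⟩ else 0 with hg'_def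
  have hg'eq : ∀ lam ∈ Ioi (0:ℝ), (g' lam : H →L[ℂ] H) = g lam := by
    intro lam hlam
    simp [hg'_def, dif_pos (show (0:ℝ) < lam from hlam)]
  have hg'c : ContinuousOn g' (Ioi 0) := by
    rw [Topology.IsEmbedding.subtypeVal.continuousOn_iff]
    exact hgc.congr hg'eq
  have hg'int : IntegrableOn g' (Ioi 0) volume := by
    refine hbint.mono' (hg'c.aestronglyMeasurable_of_isSeparable measurableSet_Ioi
      (TopologicalSpace.IsSeparable.of_separableSpace _)) ?_
    filter_upwards [ae_restrict_mem measurableSet_Ioi] with lam hlam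
    rw [show ‖g' lam‖ = ‖(g' lam : H →L[ℂ] H)‖ from rfl, hg'eq lam hlam]
    exact hgnorm lam hlam
  have hval : ∫ lam in Ioi (0:ℝ), g lam = p.subtypeL (∫ lam in Ioi (0:ℝ), g' lam) := by
    rw [← p.subtypeL.integral_comp_comm hg'int]
    refine integral_congr_ae ?_
    filter_upwards [ae_restrict_mem measurableSet_Ioi] with lam hlam
    exact (hg'eq lam hlam).symm
  have hIc : IsCompactOperator ⇑(∫ lam in Ioi (0:ℝ), g lam) := by
    rw [hval]
    exact (∫ lam in Ioi (0:ℝ), g' lam).2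
  -- the commutator equals `π⁻¹` times this integral
  have key : Ψ f ∘L T - T ∘L Ψ f = (Real.pi)⁻¹ • ∫ lam in Ioi (0:ℝ), g lam := by
    ext ψ
    have h1 := hrep (T ψ)
    have h2 := hrep ψ
    have hTint : Integrable (fun lam : ℝ => T ((Real.sqrt lam)⁻¹ • Ψ (d lam) ψ))
        (volume.restrict (Ioi 0)) := T.integrable_comp h2.1
    rw [ContinuousLinearMap.sub_apply, ContinuousLinearMap.comp_apply,
      ContinuousLinearMap.comp_apply, h1.2, h2.2, T.map_smul_of_tower,
      ← T.integral_comp_comm h2.1, ← smul_sub,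
      ← integral_sub h1.1 hTint, ContinuousLinearMap.smul_apply,
      ContinuousLinearMap.integral_apply hgint]
    congr 1
    refine integral_congr_ae (Filter.Eventually.of_forall fun lam => ?_)
    simp [hg_def, hcomm_def, smul_sub, ContinuousLinearMap.map_smul_of_tower]
  rw [key]
  have := hIc.smul ((Real.pi)⁻¹ : ℝ)
  simpa using this
end
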